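/- arXiv:0705.2830 — 2 statements merged into one kernel-verified Lean document; each statement's English description precedes it below -/
import Mathlib

section
/- The real arrangement in R^{n+1} consisting of the hyperplanes {x_i = x_j}, {x_i = -x_j} for 1 ≤ i < j ≤ n+1 together with {x_1 = 0} is simplicial: every connected component of the complement is an open simplicial cone, i.e. of the form {x : f_1(x) > 0, ..., f_{n+1}(x) > 0} for n+1 linearly independent linear forms f_1,...,f_{n+1}. -/
open Set

/-- A set `C` is an open simplicial cone if it is the locus of positivity of a linearly
independent family of `N` linear forms. -/
def IsSimplicialCone {N : ℕ} (C : Set (Fin N → ℝ)) : Prop :=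
  ∃ f : Fin N → ((Fin N → ℝ) →ₗ[ℝ] ℝ),
    LinearIndependent ℝ f ∧ C = {x | ∀ i, 0 < f i x}

/-- The complement in `ℝ^{n+1}` of the arrangement of the hyperplanes `{xᵢ = ±xⱼ}` for
`i ≠ j` together with `{x₀ = 0}`. -/
def arrComplement (n : ℕ) : Set (Fin (n + 1) → ℝ) :=
  {x | (∀ i j, i ≠ j → x i ≠ x j ∧ x i ≠ -x j) ∧ x 0 ≠ 0}

lemma li_of_dual {N : ℕ} (f : Fin N → ((Fin N → ℝ) →ₗ[ℝ] ℝ))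
    (v : Fin N → (Fin N → ℝ)) (h : ∀ k j, f k (v j) = if k = j then 1 else 0) :
    LinearIndependent ℝ f := by
  rw [Fintype.linearIndependent_iff]
  intro c hc j
  have h2 := congrArg (fun φ : (Fin N → ℝ) →ₗ[ℝ] ℝ => φ (v j)) hc
  simp only [LinearMap.coe_sum, Finset.sum_apply, LinearMap.smul_apply, smul_eq_mul,
    LinearMap.zero_apply, h, mul_ite, mul_one, mul_zero] at h2
  simpa using h2

lemma chamber_eq_component {N : ℕ} (S : Set (Fin N → ℝ))
    (f : Fin N → ((Fin N → ℝ) →ₗ[ℝ] ℝ)) (x : Fin N → ℝ)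
    (hx : ∀ i, 0 < f i x)
    (hsub : {y : Fin N → ℝ | ∀ i, 0 < f i y} ⊆ S)
    (hcl : ∀ y ∈ S, (∀ i, 0 ≤ f i y) → ∀ i, 0 < f i y) :
    connectedComponentIn S x = {y : Fin N → ℝ | ∀ i, 0 < f i y} := by
  set C := {y : Fin N → ℝ | ∀ i, 0 < f i y} with hC
  have hxC : x ∈ C := hx
  have hCconv : Convex ℝ C := by
    have h1 : C = ⋂ i, {y : Fin N → ℝ | 0 < f i y} := by ext y; simp [hC, mem_iInter]
    rw [h1]
    exact convex_iInter fun i => convex_halfSpace_gt (f i).isLinear 0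
  have hCopen : IsOpen C := by
    have h1 : C = ⋂ i, (f i) ⁻¹' (Ioi 0) := by ext y; simp [hC, mem_iInter, mem_preimage]
    rw [h1]
    exact isOpen_iInter_of_finite fun i =>
      (isOpen_Ioi).preimage (f i).continuous_of_finiteDimensional
  apply subset_antisymm
  · intro y hy
    by_contra hyC
    have hclosure : closure C ⊆ {y : Fin N → ℝ | ∀ i, 0 ≤ f i y} := by
      intro z hz i
      have h1 : closure C ⊆ {y : Fin N → ℝ | 0 ≤ f i y} := by
        apply closure_minimal (fun w hw => (hw i).le)
        exact isClosed_le continuous_const (f i).continuous_of_finiteDimensional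
      exact h1 hz
    have hcover : connectedComponentIn S x ⊆ C ∪ (closure C)ᶜ := by
      intro z hz
      by_cases h1 : ∀ i, 0 ≤ f i z
      · exact Or.inl (hcl z (connectedComponentIn_subset S x hz) h1)
      · exact Or.inr fun hz2 => h1 (hclosure hz2)
    rcases isPreconnected_connectedComponentIn C (closure C)ᶜ hCopen
      isClosed_closure.isOpen_compl hcover
      ⟨x, mem_connectedComponentIn (hsub hxC), hxC⟩
      ⟨y, hy, fun h => hyC (hcl y (connectedComponentIn_subset S x hy) (hclosure h))⟩
      with ⟨z, _, hz1, hz2⟩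
    exact hz2 (subset_closure hz1)
  · exact hCconv.isPreconnected.subset_connectedComponentIn hxC hsub

/-- The arrangement in `ℝ^{n+1}` consisting of the hyperplanes `{xᵢ = xⱼ}`, `{xᵢ = -xⱼ}` for
`i < j` together with `{x₀ = 0}` is simplicial: every chamber (connected component of the
complement) is an open simplicial cone. -/
theorem arrangement_is_simplicial (n : ℕ) :
    ∀ x ∈ arrComplement n, IsSimplicialCone (connectedComponentIn (arrComplement n) x) := by
  intro x hx
  obtain ⟨hxd, hx0⟩ := hx
  have habs : Function.Injective (fun i => |x i|) := by
    intro i j h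
    by_contra hij
    simp only at h
    rcases abs_eq_abs.mp h with h | h
    · exact (hxd i j hij).1 h
    · exact (hxd i j hij).2 h
  set σ : Equiv.Perm (Fin (n+1)) := Tuple.sort (fun i => |x i|) with hσ
  have hb : StrictMono (fun k => |x (σ k)|) :=
    (Tuple.monotone_sort (fun i => |x i|)).strictMono_of_injective (habs.comp σ.injective)
  set s : Fin (n+1) → ℝ := fun k => if x (σ k) < 0 then -1 else 1 with hs
  have hs1 : ∀ k, s k = 1 ∨ s k = -1 := by
    intro k; by_cases h : x (σ k) < 0 <;> simp [hs, h]
  have hss : ∀ k, s k * s k = 1 := by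
    intro k; rcases hs1 k with h | h <;> rw [h] <;> norm_num
  have hsx : ∀ k, s k * x (σ k) = |x (σ k)| := by
    intro k; by_cases h : x (σ k) < 0
    · simp [hs, h, abs_of_neg h]
    · simp [hs, h, abs_of_nonneg (not_lt.mp h)]
  have habs_s : ∀ (t : ℝ) (k : Fin (n+1)), |s k * t| = |t| := by
    intro t k; rcases hs1 k with h | h <;> rw [h] <;> simp
  set e : Fin (n+1) → ((Fin (n+1) → ℝ) →ₗ[ℝ] ℝ) := fun k => s k • LinearMap.proj (σ k) with heq
  have he : ∀ (k : Fin (n+1)) (y : Fin (n+1) → ℝ), e k y = s k * y (σ k) := by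
    intro k y; simp [heq]
  set w : Fin (n+1) → (Fin (n+1) → ℝ) :=
    fun j i => if j ≤ σ.symm i then s (σ.symm i) else 0 with hw
  have hew : ∀ k j, e k (w j) = if j ≤ k then 1 else 0 := by
    intro k j
    rw [he]
    simp only [hw, Equiv.symm_apply_apply, mul_ite, mul_zero, hss k]
  have hmemS : ∀ y : Fin (n+1) → ℝ, StrictMono (fun k => |y (σ k)|) → y 0 ≠ 0 →
      y ∈ arrComplement n := by
    intro y hmono hy0
    have hinj : Function.Injective fun i => |y i| := by
      intro i j h
      simp only at h
      have h2 : σ.symm i = σ.symm j := by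
        apply hmono.injective
        simp only [Equiv.apply_symm_apply, h]
      exact σ.symm.injective h2
    refine ⟨fun i j hij => ?_, hy0⟩
    have h' : |y i| ≠ |y j| := fun h => hij (hinj h)
    constructor
    · intro h; exact h' (by rw [h])
    · intro h; exact h' (by rw [h, abs_neg])
  have hneS : ∀ y ∈ arrComplement n, ∀ i j, i ≠ j → |y i| ≠ |y j| := by
    intro y hy i j hij h
    rcases abs_eq_abs.mp h with h | h
    · exact (hy.1 i j hij).1 h
    · exact (hy.1 i j hij).2 h
  by_cases hA : σ 0 = 0
  · -- Case A : smallest coordinate in absolute value is x 0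
    refine ⟨Fin.cases (e 0) (fun k => e k.succ - e k.castSucc), ?_, ?_⟩
    · apply li_of_dual _ w
      intro k j
      induction k using Fin.cases with
      | zero =>
        simp only [Fin.cases_zero, hew]
        simp [Fin.le_zero_iff, eq_comm]
      | succ k =>
        simp only [Fin.cases_succ, LinearMap.sub_apply, hew, Fin.le_def, Fin.ext_iff,
          Fin.val_succ, Fin.coe_castSucc]
        split_ifs <;> (try norm_num) <;> (try omega) <;> contradiction
    · apply chamber_eq_component (arrComplement n) _ x
      · intro i
        induction i using Fin.cases with
        | zero =>
          simp only [Fin.cases_zero, he, hsx]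
          rw [hA]
          exact abs_pos.mpr hx0
        | succ k =>
          simp only [Fin.cases_succ, LinearMap.sub_apply, he, hsx, sub_pos]
          exact hb (Fin.castSucc_lt_succ (i := k))
      · intro y hy
        have h0 : 0 < s 0 * y (σ 0) := by
          have := hy 0
          simpa only [Fin.cases_zero, he] using this
        have hchain : ∀ k : Fin n,
            s k.castSucc * y (σ k.castSucc) < s k.succ * y (σ k.succ) := by
          intro k
          have := hy k.succ
          simp only [Fin.cases_succ, LinearMap.sub_apply, he, sub_pos] at this
          exact this
        have hg : StrictMono (fun k => s k * y (σ k)) :=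
          Fin.strictMono_iff_lt_succ.mpr hchain
        have hgpos : ∀ k, 0 < s k * y (σ k) :=
          fun k => lt_of_lt_of_le h0 (hg.monotone (Fin.zero_le k))
        have hya : ∀ k, |y (σ k)| = s k * y (σ k) := by
          intro k
          rw [← habs_s (y (σ k)) k]
          exact abs_of_pos (hgpos k)
        apply hmemS y
        · have h1 : (fun k => |y (σ k)|) = fun k => s k * y (σ k) := funext hya
          rw [h1]; exact hg
        · intro h
          have h2 := hgpos (σ.symm 0)
          rw [Equiv.apply_symm_apply, h, mul_zero] at h2
          exact lt_irrefl _ h2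
      · intro y hyS hge i
        induction i using Fin.cases with
        | zero =>
          rcases (hge 0).lt_or_eq with h | h
          · exact h
          · exfalso
            have h2 : s 0 * y (σ 0) = 0 := by
              have := h.symm
              simpa only [Fin.cases_zero, he] using this
            rcases mul_eq_zero.mp h2 with h3 | h3
            · rcases hs1 0 with h4 | h4 <;> rw [h4] at h3 <;> norm_num at h3
            · rw [hA] at h3; exact hyS.2 h3
        | succ k =>
          rcases (hge k.succ).lt_or_eq with h | h
          · exact h
          · exfalso
            have h2 : s k.succ * y (σ k.succ) = s k.castSucc * y (σ k.castSucc) := by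
              have := h.symm
              simp only [Fin.cases_succ, LinearMap.sub_apply, he] at this
              linarith
            have h3 : |y (σ k.succ)| = |y (σ k.castSucc)| := by
              nth_rewrite 1 [← habs_s (y (σ k.succ)) k.succ]
              rw [h2, habs_s]
            exact hneS y hyS _ _ (σ.injective.ne (Fin.castSucc_lt_succ (i := k)).ne') h3
  · -- Case B : σ 0 ≠ 0
    have hn : 1 ≤ n := by
      have h1 := (σ 0).isLt
      have h2 : (σ 0).val ≠ 0 := fun h => hA (Fin.ext h)
      omega
    have hval1 : (1 : Fin (n+1)).val = 1 := by simp [Fin.val_one']; omega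
    have h01lt : (0 : Fin (n+1)) < 1 := by rw [Fin.lt_def, hval1]; simp
    have h01 : (0 : Fin (n+1)) ≠ 1 := h01lt.ne
    set u : Fin (n+1) → ℝ := fun i => if σ.symm i = 0 then s 0 else 0 with hu
    have heu : ∀ k, e k u = if k = 0 then 1 else 0 := by
      intro k
      rw [he]
      simp only [hu, Equiv.symm_apply_apply]
      by_cases h : k = 0
      · rw [if_pos h, if_pos h, h, hss]
      · rw [if_neg h, if_neg h, mul_zero]
    refine ⟨Fin.cases (e 1 - e 0)
      (fun k : Fin n => if (k : ℕ) = 0 then e 1 + e 0 else e k.succ - e k.castSucc), ?_, ?_⟩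
    · -- linear independence
      apply li_of_dual _ (Fin.cases ((1/2 : ℝ) • w 1 - (1/2 : ℝ) • u)
        (fun j : Fin n => if (j : ℕ) = 0 then (1/2 : ℝ) • w 1 + (1/2 : ℝ) • u else w j.succ))
      have hA' : ∀ t : Fin (n+1), e t ((1/2 : ℝ) • w 1 - (1/2 : ℝ) • u) =
          1/2 * (if 1 ≤ t then 1 else 0) - 1/2 * (if t = 0 then 1 else 0) := by
        intro t
        rw [map_sub, map_smul, map_smul, hew, heu]
        simp [smul_eq_mul]
      have hB' : ∀ t : Fin (n+1), e t ((1/2 : ℝ) • w 1 + (1/2 : ℝ) • u) =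
          1/2 * (if 1 ≤ t then 1 else 0) + 1/2 * (if t = 0 then 1 else 0) := by
        intro t
        rw [map_add, map_smul, map_smul, hew, heu]
        simp [smul_eq_mul]
      intro k j
      induction k using Fin.cases with
      | zero =>
        induction j using Fin.cases with
        | zero =>
          simp only [Fin.cases_zero, LinearMap.sub_apply, hA']
          simp only [Fin.le_def, Fin.ext_iff, Fin.val_zero, hval1]
          split_ifs <;> (try norm_num) <;> (try omega) <;> contradiction
        | succ j =>
          simp only [Fin.cases_zero, Fin.cases_succ]
          by_cases hj : (j : ℕ) = 0 <;>
            simp only [hj, eq_self_iff_true, if_true, if_false] <;>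
            simp only [LinearMap.sub_apply, hA', hB', hew] <;>
            simp only [Fin.le_def, Fin.ext_iff, Fin.val_zero, Fin.val_succ, hval1] <;>
            split_ifs <;> (try norm_num) <;> (try omega) <;> contradiction
      | succ k =>
        induction j using Fin.cases with
        | zero =>
          simp only [Fin.cases_zero, Fin.cases_succ]
          by_cases hk : (k : ℕ) = 0 <;>
            simp only [hk, eq_self_iff_true, if_true, if_false] <;>
            simp only [LinearMap.sub_apply, LinearMap.add_apply, hA'] <;>
            simp only [Fin.le_def, Fin.ext_iff, Fin.val_zero, Fin.val_succ,
              Fin.coe_castSucc, hval1] <;>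
            split_ifs <;> (try norm_num) <;> (try omega) <;> contradiction
        | succ j =>
          simp only [Fin.cases_succ]
          by_cases hk : (k : ℕ) = 0 <;> by_cases hj : (j : ℕ) = 0 <;>
            simp only [hk, hj, eq_self_iff_true, if_true, if_false] <;>
            simp only [LinearMap.sub_apply, LinearMap.add_apply, hA', hB', hew] <;>
            simp only [Fin.le_def, Fin.ext_iff, Fin.val_zero, Fin.val_succ,
              Fin.coe_castSucc, hval1] <;>
            split_ifs <;> (try norm_num) <;> (try omega) <;> contradiction
    · apply chamber_eq_component (arrComplement n) _ x
      · -- x in chamber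
        intro i
        induction i using Fin.cases with
        | zero =>
          simp only [Fin.cases_zero, LinearMap.sub_apply, he, hsx, sub_pos]
          exact hb h01lt
        | succ k =>
          simp only [Fin.cases_succ]
          by_cases hk : (k : ℕ) = 0
          · rw [if_pos hk]
            simp only [LinearMap.add_apply, he, hsx]
            have h1 := hb h01lt
            have h2 := abs_nonneg (x (σ 0))
            linarith
          · rw [if_neg hk]
            simp only [LinearMap.sub_apply, he, hsx, sub_pos]
            exact hb (Fin.castSucc_lt_succ (i := k))
      · -- chamber ⊆ complement
        intro y hy
        have h1 : s 0 * y (σ 0) < s 1 * y (σ 1) := by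
          have := hy 0
          simp only [Fin.cases_zero, LinearMap.sub_apply, he, sub_pos] at this
          exact this
        have h2 : 0 < s 1 * y (σ 1) + s 0 * y (σ 0) := by
          have := hy (Fin.succ ⟨0, hn⟩)
          simp only [Fin.cases_succ] at this
          rw [if_true] at this
          rw [LinearMap.add_apply, he, he] at this
          linarith
        have hchain : ∀ k : Fin n,
            s k.castSucc * y (σ k.castSucc) < s k.succ * y (σ k.succ) := by
          intro k
          by_cases hk : (k : ℕ) = 0
          · have hc : k.castSucc = (0 : Fin (n+1)) := by apply Fin.ext; simpa using hk
            have hs' : k.succ = (1 : Fin (n+1)) := by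
              apply Fin.ext; rw [Fin.val_succ, hk, hval1]
            rw [hc, hs']
            exact h1
          · have := hy k.succ
            simp only [Fin.cases_succ] at this
            rw [if_neg hk] at this
            simpa only [LinearMap.sub_apply, he, sub_pos] using this
        have hg : StrictMono (fun k => s k * y (σ k)) :=
          Fin.strictMono_iff_lt_succ.mpr hchain
        have hgpos1 : 0 < s 1 * y (σ 1) := by linarith
        have hgpos : ∀ k, (1 : Fin (n+1)) ≤ k → 0 < s k * y (σ k) :=
          fun k hk => lt_of_lt_of_le hgpos1 (hg.monotone hk)
        have hya : ∀ k, (1 : Fin (n+1)) ≤ k → |y (σ k)| = s k * y (σ k) := by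
          intro k hk
          rw [← habs_s (y (σ k)) k]
          exact abs_of_pos (hgpos k hk)
        have h0abs : |y (σ 0)| < s 1 * y (σ 1) := by
          rw [← habs_s (y (σ 0)) 0]
          rw [abs_lt]
          constructor <;> linarith
        apply hmemS y
        · rw [Fin.strictMono_iff_lt_succ]
          intro k
          by_cases hk : (k : ℕ) = 0
          · have hc : k.castSucc = (0 : Fin (n+1)) := by apply Fin.ext; simpa using hk
            have hs' : k.succ = (1 : Fin (n+1)) := by
              apply Fin.ext; rw [Fin.val_succ, hk, hval1]
            rw [hc, hs', hya 1 le_rfl]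
            exact h0abs
          · have hk1 : (1 : Fin (n+1)) ≤ k.castSucc := by
              rw [Fin.le_def, hval1]; simp only [Fin.coe_castSucc]; omega
            have hk2 : (1 : Fin (n+1)) ≤ k.succ := by
              rw [Fin.le_def, hval1]; simp only [Fin.val_succ]; omega
            rw [hya _ hk1, hya _ hk2]
            exact hg (Fin.castSucc_lt_succ (i := k))
        · -- y 0 ≠ 0
          have hs0 : σ.symm 0 ≠ 0 := fun h =>
            hA ((congrArg σ h).symm.trans (Equiv.apply_symm_apply σ 0))
          have hs0' : (1 : Fin (n+1)) ≤ σ.symm 0 := by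
            rw [Fin.le_def, hval1]
            have : (σ.symm 0).val ≠ 0 := fun h => hs0 (Fin.ext h)
            omega
          intro h
          have h3 := hgpos (σ.symm 0) hs0'
          rw [Equiv.apply_symm_apply, h, mul_zero] at h3
          exact lt_irrefl _ h3
      · -- relative closedness
        intro y hyS hge i
        have hσ01 : σ 1 ≠ σ 0 := σ.injective.ne (Ne.symm h01)
        induction i using Fin.cases with
        | zero =>
          rcases (hge 0).lt_or_eq with h | h
          · exact h
          · exfalso
            have h2 : s 1 * y (σ 1) = s 0 * y (σ 0) := by
              have := h.symm
              simp only [Fin.cases_zero, LinearMap.sub_apply, he] at this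
              linarith
            have h3 : |y (σ 1)| = |y (σ 0)| := by
              nth_rewrite 1 [← habs_s (y (σ 1)) 1]
              rw [h2, habs_s]
            exact hneS y hyS _ _ hσ01 h3
        | succ k =>
          rcases (hge k.succ).lt_or_eq with h | h
          · exact h
          · exfalso
            by_cases hk : (k : ℕ) = 0
            · rw [show ((Fin.cases (e 1 - e 0) (fun k : Fin n =>
                if (k : ℕ) = 0 then e 1 + e 0 else e k.succ - e k.castSucc) k.succ :
                (Fin (n+1) → ℝ) →ₗ[ℝ] ℝ)) = e 1 + e 0 by
                  rw [Fin.cases_succ, if_pos hk]] at h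
              have h2 : s 1 * y (σ 1) = -(s 0 * y (σ 0)) := by
                have := h.symm
                simp only [LinearMap.add_apply, he] at this
                linarith
              have h3 : |y (σ 1)| = |y (σ 0)| := by
                nth_rewrite 1 [← habs_s (y (σ 1)) 1]
                rw [h2, abs_neg, habs_s]
              exact hneS y hyS _ _ hσ01 h3
            · rw [show ((Fin.cases (e 1 - e 0) (fun k : Fin n =>
                if (k : ℕ) = 0 then e 1 + e 0 else e k.succ - e k.castSucc) k.succ :
                (Fin (n+1) → ℝ) →ₗ[ℝ] ℝ)) = e k.succ - e k.castSucc by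
                  rw [Fin.cases_succ, if_neg hk]] at h
              have h2 : s k.succ * y (σ k.succ) = s k.castSucc * y (σ k.castSucc) := by
                have := h.symm
                simp only [LinearMap.sub_apply, he] at this
                linarith
              have h3 : |y (σ k.succ)| = |y (σ k.castSucc)| := by
                nth_rewrite 1 [← habs_s (y (σ k.succ)) k.succ]
                rw [h2, habs_s]
              exact hneS y hyS _ _ (σ.injective.ne (Fin.castSucc_lt_succ (i := k)).ne') h3
end

section
/- The quotient polynomial of the quasi-Poincaré polynomial of affine B_n by the weighted Poincaré polynomial of B_n equals ∏_{i=1}^{n-1}(1+q^i), and this product factors into cyclotomic polynomials as ∏_{h ≤ n} Φ_{2h}(q)^{⌊(n-1)/h⌋ - ⌊(n-1)/(2h)⌋}. -/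
open Polynomial Finset

namespace Stmt13

/-- We work in `ℚ[q][t]`: `q` is the inner variable, `t` the outer one. -/
noncomputable abbrev R : Type := Polynomial (Polynomial ℚ)

noncomputable def q : R := Polynomial.C Polynomial.X
noncomputable def t : R := Polynomial.X

/-- `[k]_q = (q^k - 1)/(q - 1) = 1 + q + ⋯ + q^{k-1}`. -/
noncomputable def qInt (k : ℕ) : R := ∑ j ∈ Finset.range k, q ^ j

/-- `[m]_q! = ∏_{k=1}^m [k]_q`. -/
noncomputable def qFact (m : ℕ) : R := ∏ k ∈ Finset.range m, qInt (k + 1)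

/-- `[2m]_q!! = ∏_{k=1}^m [k]_q (1 + q^k)`. -/
noncomputable def qDoubleFact (m : ℕ) : R := ∏ k ∈ Finset.range m, qInt (k + 1) * (1 + q ^ (k + 1))

/-- The quasi-Poincaré polynomial `Ŵ(q,t) = [2(n-1)]_q!! ⬝ [n]_q ⬝ ∏_{i=0}^{n-1}(1 + t qⁱ)`
of affine `Bₙ`. -/
noncomputable def What (n : ℕ) : R :=
  qDoubleFact (n - 1) * qInt n * ∏ i ∈ Finset.range n, (1 + t * q ^ i)

/-- The weighted Poincaré polynomial `W_{Bₙ}(q,t) = [2n]_{q,t}!! = [n]_q! ⬝ ∏_{i=0}^{n-1}(1 + t qⁱ)`. -/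
noncomputable def WB (n : ℕ) : R :=
  qFact n * ∏ i ∈ Finset.range n, (1 + t * q ^ i)

/-- `1 + X^i` as product of cyclotomics. -/
lemma one_add_X_pow_eq (i : ℕ) (hi : 1 ≤ i) :
    (1 + X ^ i : ℚ[X]) = ∏ d ∈ (2 * i).divisors \ i.divisors, cyclotomic d ℚ := by
  have hmem : i ∈ (2 * i).properDivisors := by
    rw [Nat.mem_properDivisors]
    exact ⟨⟨2, mul_comm 2 i⟩, by omega⟩
  have h := X_pow_sub_one_mul_prod_cyclotomic_eq_X_pow_sub_one_of_dvd ℚ (Nat.mem_properDivisors.mp hmem).1 (by omega)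
  have hne : (X ^ i - 1 : ℚ[X]) ≠ 0 := by
    have := Polynomial.monic_X_pow_sub_C (1 : ℚ) (by omega : i ≠ 0)
    simpa using this.ne_zero
  apply mul_left_cancel₀ hne
  rw [h]
  have : (X : ℚ[X]) ^ (2 * i) = X ^ i * X ^ i := by rw [two_mul, pow_add]
  rw [this]; ring

lemma sdiff_eq (i : ℕ) (hi : 1 ≤ i) :
    (2 * i).divisors \ i.divisors =
      (i.divisors.filter (fun h => ¬ (2 * h ∣ i))).image (fun h => 2 * h) := by
  ext d
  simp only [Finset.mem_sdiff, Nat.mem_divisors, Finset.mem_image, Finset.mem_filter]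
  constructor
  · rintro ⟨⟨hd2i, -⟩, hdi⟩
    have hdi' : ¬ d ∣ i := fun h => hdi ⟨h, by omega⟩
    have h2d : 2 ∣ d := by
      by_contra h2
      have hco : Nat.Coprime d 2 := Nat.coprime_two_right.mpr (Nat.odd_iff.mpr (by omega))
      exact hdi' (hco.dvd_of_dvd_mul_left hd2i)
    obtain ⟨h, rfl⟩ := h2d
    refine ⟨h, ⟨⟨(mul_dvd_mul_iff_left (two_ne_zero)).mp hd2i, by omega⟩, hdi'⟩, rfl⟩
  · rintro ⟨h, ⟨⟨hhi, -⟩, hnd⟩, rfl⟩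
    exact ⟨⟨mul_dvd_mul_left 2 hhi, by omega⟩, fun hh => hnd hh.1⟩

lemma one_add_X_pow_eq' (n i : ℕ) (hi : i ∈ Finset.Ico 1 n) :
    (1 + X ^ i : ℚ[X]) =
      ∏ h ∈ Finset.Icc 1 n, (if h ∣ i ∧ ¬ (2 * h ∣ i) then cyclotomic (2 * h) ℚ else 1) := by
  rw [Finset.mem_Ico] at hi
  rw [← Finset.prod_filter, one_add_X_pow_eq i hi.1, sdiff_eq i hi.1,
    Finset.prod_image (by intro a _ b _ h; simp only at h; omega)]
  apply Finset.prod_congr _ fun _ _ => rfl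
  ext h
  simp only [Finset.mem_filter, Nat.mem_divisors, Finset.mem_Icc]
  constructor
  · rintro ⟨⟨hhi, -⟩, hnd⟩
    exact ⟨⟨Nat.one_le_iff_ne_zero.mpr (by rintro rfl; simp at hhi; omega),
      le_trans (Nat.le_of_dvd (by omega) hhi) (by omega)⟩, hhi, hnd⟩
  · rintro ⟨-, hhi, hnd⟩
    exact ⟨⟨hhi, by omega⟩, hnd⟩

lemma card_filter (n h : ℕ) (hn : 1 ≤ n) :
    ((Finset.Ico 1 n).filter (fun i => h ∣ i ∧ ¬ (2 * h ∣ i))).card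
      = (n - 1) / h - (n - 1) / (2 * h) := by
  have hIco : Finset.Ico 1 n = Finset.Ioc 0 (n - 1) := by
    ext i; simp only [Finset.mem_Ico, Finset.mem_Ioc]; omega
  have hsub : (Finset.Ioc 0 (n-1)).filter (fun i => (2 * h) ∣ i) ⊆
      (Finset.Ioc 0 (n-1)).filter (fun i => h ∣ i) := by
    intro i hi
    simp only [Finset.mem_filter] at hi ⊢
    exact ⟨hi.1, (dvd_mul_left h 2).trans hi.2⟩
  have heq : (Finset.Ico 1 n).filter (fun i => h ∣ i ∧ ¬ (2 * h ∣ i)) =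
      (Finset.Ioc 0 (n-1)).filter (fun i => h ∣ i) \
        (Finset.Ioc 0 (n-1)).filter (fun i => (2 * h) ∣ i) := by
    rw [hIco]
    ext i
    simp only [Finset.mem_filter, Finset.mem_sdiff, Finset.mem_Ioc]
    tauto
  rw [heq, Finset.card_sdiff_of_subset hsub, Nat.Ioc_filter_dvd_card_eq_div, Nat.Ioc_filter_dvd_card_eq_div]


lemma key (n : ℕ) (hn : 1 ≤ n) :
    ∏ i ∈ Finset.Ico 1 n, (1 + X ^ i : ℚ[X]) =
      ∏ h ∈ Finset.Icc 1 n, (cyclotomic (2 * h) ℚ) ^ ((n - 1) / h - (n - 1) / (2 * h)) := by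
  rw [Finset.prod_congr rfl (one_add_X_pow_eq' n), Finset.prod_comm]
  refine Finset.prod_congr rfl fun h hh => ?_
  rw [← Finset.prod_filter, Finset.prod_const, card_filter n h hn]


/-- The quotient of the quasi-Poincaré polynomial of affine `Bₙ` by the weighted Poincaré
polynomial of `Bₙ` equals `∏_{i=1}^{n-1}(1 + qⁱ)`, which factors into cyclotomic polynomials
as `∏_{1 ≤ h ≤ n} Φ_{2h}(q)^{⌊(n-1)/h⌋ - ⌊(n-1)/(2h)⌋}`. -/
theorem quotient_poincare_factorization (n : ℕ) (hn : 1 ≤ n) :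
    What n = WB n * ∏ i ∈ Finset.Ico 1 n, (1 + q ^ i) ∧
    (∏ i ∈ Finset.Ico 1 n, (1 + q ^ i)) =
      ∏ h ∈ Finset.Icc 1 n,
        (Polynomial.C (Polynomial.cyclotomic (2 * h) ℚ) : R) ^ ((n - 1) / h - (n - 1) / (2 * h)) := by
  constructor
  · obtain ⟨m, rfl⟩ : ∃ m, n = m + 1 := ⟨n - 1, by omega⟩
    show qDoubleFact (m + 1 - 1) * qInt (m + 1) * _ = qFact (m + 1) * _ * _
    rw [Nat.add_sub_cancel]
    unfold qDoubleFact qFact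
    rw [Finset.prod_mul_distrib, Finset.prod_range_succ,
      Finset.prod_Ico_eq_prod_range]
    rw [Nat.add_sub_cancel]
    have : ∀ k, (1 : R) + q ^ (1 + k) = 1 + q ^ (k + 1) := fun k => by rw [add_comm 1 k]
    rw [Finset.prod_congr rfl fun k _ => this k,
      Finset.prod_range_succ fun x => qInt (x + 1)]
    ring
  · have h1 : ∀ i : ℕ, (1 + q ^ i : R) = Polynomial.C (1 + X ^ i) := fun i => by
      simp [q, map_add, map_pow]
    calc (∏ i ∈ Finset.Ico 1 n, (1 + q ^ i : R))
        = Polynomial.C (∏ i ∈ Finset.Ico 1 n, (1 + X ^ i : ℚ[X])) := by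
          rw [map_prod]; exact Finset.prod_congr rfl fun i _ => h1 i
      _ = _ := by
          rw [key n hn, map_prod]
          exact Finset.prod_congr rfl fun h _ => by rw [map_pow]


end Stmt13
end
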